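/- arXiv:1703.08889 — 3 statements merged into one kernel-verified Lean document; each statement's English description precedes it below -/
import Mathlib

section
/- Let A be a commutative ℂ-algebra and T_A = Der_ℂ(A). Let [·,·]' be a ℂ-bilinear bracket making A ⊕ T_A a Lie algebra over ℂ such that: (i) [ι(a), ι(b)]' = 0 for all a, b ∈ A; (ii) σ([x,y]') = [σ(x), σ(y)] for all x, y ∈ A ⊕ T_A; (iii) [x, b·y]' = σ(x)(b)·y + b·[x,y]' for all x, y ∈ A ⊕ T_A and b ∈ A; (iv) [x, ι(b)]' = ι(σ(x)(b)) for all x ∈ A ⊕ T_A and b ∈ A. Then there exists a unique closed 2-form β on T_A such that [·,·]' = [·,·]_β, i.e. [(a,ξ),(b,τ)]' = (ξ(b) − τ(a) + β(ξ,τ), [ξ,τ]) for all a,b ∈ A and ξ,τ ∈ T_A. -/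
/-- The bracket `[(a,ξ),(b,τ)]_β = (ξ(b) − τ(a) + β(ξ,τ), [ξ,τ])` on `A ⊕ T_A`. -/
def brkt {A : Type*} [CommRing A] [Algebra ℂ A]
    (β : Derivation ℂ A A → Derivation ℂ A A → A)
    (x y : A × Derivation ℂ A A) : A × Derivation ℂ A A :=
  (x.2 y.1 - y.2 x.1 + β x.2 y.2, ⁅x.2, y.2⁆)

/-- `β` is a 2-form: `A`-bilinear and alternating. -/
def IsTwoForm {A : Type*} [CommRing A] [Algebra ℂ A]
    (β : Derivation ℂ A A → Derivation ℂ A A → A) : Prop :=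
  (∀ ξ₁ ξ₂ τ, β (ξ₁ + ξ₂) τ = β ξ₁ τ + β ξ₂ τ) ∧
  (∀ ξ τ₁ τ₂, β ξ (τ₁ + τ₂) = β ξ τ₁ + β ξ τ₂) ∧
  (∀ (b : A) ξ τ, β (b • ξ) τ = b * β ξ τ) ∧
  (∀ (b : A) ξ τ, β ξ (b • τ) = b * β ξ τ) ∧
  (∀ ξ, β ξ ξ = 0)

/-- `β` is closed. -/
def IsClosed2 {A : Type*} [CommRing A] [Algebra ℂ A]
    (β : Derivation ℂ A A → Derivation ℂ A A → A) : Prop :=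
  ∀ ξ τ χ : Derivation ℂ A A,
    ξ (β τ χ) - τ (β ξ χ) + χ (β ξ τ)
      - β ⁅ξ, τ⁆ χ + β ⁅ξ, χ⁆ τ - β ⁅τ, χ⁆ ξ = 0

/-- a ℂ-bilinear Lie bracket on `A ⊕ T_A` satisfying (i)–(iv) is `[·,·]_β`
for a unique closed 2-form `β`. -/
theorem stmt2 {A : Type*} [CommRing A] [Algebra ℂ A]
    (br : (A × Derivation ℂ A A) →ₗ[ℂ] (A × Derivation ℂ A A) →ₗ[ℂ] (A × Derivation ℂ A A))
    (halt : ∀ x, br x x = 0)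
    (hjac : ∀ x y z, br x (br y z) + br y (br z x) + br z (br x y) = 0)
    (hi : ∀ a b : A, br (a, 0) (b, 0) = 0)
    (hii : ∀ x y, (br x y).2 = ⁅x.2, y.2⁆)
    (hiii : ∀ (x y : A × Derivation ℂ A A) (b : A),
        br x (b • y) = (x.2 b) • y + b • br x y)
    (hiv : ∀ (x : A × Derivation ℂ A A) (b : A), br x (b, 0) = (x.2 b, 0)) :
    ∃! β : Derivation ℂ A A → Derivation ℂ A A → A,
      IsTwoForm β ∧ IsClosed2 β ∧
      ∀ (a b : A) (ξ τ : Derivation ℂ A A), br (a, ξ) (b, τ) = brkt β (a, ξ) (b, τ) := by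
  -- antisymmetry
  have hanti : ∀ x y, br x y = - br y x := by
    intro x y
    have h := halt (x + y)
    simp only [map_add, LinearMap.add_apply, halt x, halt y, zero_add, add_zero] at h
    linear_combination (norm := abel) h
  set β : Derivation ℂ A A → Derivation ℂ A A → A :=
    fun ξ τ => (br (0, ξ) (0, τ)).1 with hβ
  -- the core bracket on pure derivations
  have hcore : ∀ ξ τ : Derivation ℂ A A, br (0, ξ) (0, τ) = (β ξ τ, ⁅ξ, τ⁆) := by
    intro ξ τ
    exact Prod.ext rfl (by simpa using hii (0, ξ) (0, τ))
  have hsplit : ∀ (a : A) (ξ : Derivation ℂ A A),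
      ((a, ξ) : A × Derivation ℂ A A) = (a, 0) + (0, ξ) := by
    intro a ξ; simp
  -- the main bracket formula
  have hbr : ∀ (a b : A) (ξ τ : Derivation ℂ A A),
      br (a, ξ) (b, τ) = brkt β (a, ξ) (b, τ) := by
    intro a b ξ τ
    rw [hsplit a ξ, hsplit b τ]
    simp only [map_add, LinearMap.add_apply]
    rw [hi a b, hanti (a, (0 : Derivation ℂ A A)) (0, τ), hiv (0, τ) a, hiv (0, ξ) b,
      hcore ξ τ]
    apply Prod.ext <;> simp [brkt, sub_eq_add_neg] <;> try ring
  -- basic β facts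
  have hβadd1 : ∀ ξ₁ ξ₂ τ, β (ξ₁ + ξ₂) τ = β ξ₁ τ + β ξ₂ τ := by
    intro ξ₁ ξ₂ τ
    have : ((0, ξ₁ + ξ₂) : A × Derivation ℂ A A) = (0, ξ₁) + (0, ξ₂) := by simp
    simp only [hβ, this, map_add, LinearMap.add_apply, Prod.fst_add]
  have hβadd2 : ∀ ξ τ₁ τ₂, β ξ (τ₁ + τ₂) = β ξ τ₁ + β ξ τ₂ := by
    intro ξ τ₁ τ₂
    have : ((0, τ₁ + τ₂) : A × Derivation ℂ A A) = (0, τ₁) + (0, τ₂) := by simp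
    simp only [hβ, this, map_add, Prod.fst_add]
  have hβalt : ∀ ξ, β ξ ξ = 0 := by
    intro ξ; simp only [hβ, halt]; rfl
  have hβanti : ∀ ξ τ, β ξ τ = - β τ ξ := by
    intro ξ τ
    simp only [hβ, hanti (0, ξ) (0, τ)]; rfl
  have hβsmul2 : ∀ (b : A) ξ τ, β ξ (b • τ) = b * β ξ τ := by
    intro b ξ τ
    have h1 : ((0, b • τ) : A × Derivation ℂ A A) = b • (0, τ) := by simp
    have h2 := hiii (0, ξ) (0, τ) b
    have := congrArg Prod.fst h2
    simp only [hβ, h1]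
    rw [this]
    show ξ b * 0 + b * ((br (0,ξ)) (0,τ)).1 = b * ((br (0,ξ)) (0,τ)).1
    ring
  have hβsmul1 : ∀ (b : A) ξ τ, β (b • ξ) τ = b * β ξ τ := by
    intro b ξ τ
    rw [hβanti, hβsmul2, hβanti τ ξ]; ring
  have hβneg1 : ∀ ξ τ, β (-ξ) τ = - β ξ τ := by
    intro ξ τ
    have : ((0, -ξ) : A × Derivation ℂ A A) = -(0, ξ) := by simp
    simp only [hβ, this, map_neg, LinearMap.neg_apply, Prod.fst_neg]
  -- closedness
  have hclosed : IsClosed2 β := by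
    intro ξ τ χ
    have hj := hjac (0, ξ) (0, τ) (0, χ)
    have expand : ∀ μ ν ρ : Derivation ℂ A A,
        (br (0, μ) (br (0, ν) (0, ρ))).1 = μ (β ν ρ) + β μ ⁅ν, ρ⁆ := by
      intro μ ν ρ
      rw [hcore ν ρ, hsplit (β ν ρ) ⁅ν, ρ⁆, map_add]
      rw [show (br (0, μ)) (β ν ρ, (0:Derivation ℂ A A)) = (μ (β ν ρ), 0) from hiv _ _]
      show (μ (β ν ρ), (0:Derivation ℂ A A)).1 + ((br (0,μ)) (0, ⁅ν,ρ⁆)).1 = _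
      rfl
    have hj1 := congrArg Prod.fst hj
    rw [Prod.fst_add, Prod.fst_add, Prod.fst_zero] at hj1
    rw [expand ξ τ χ, expand τ χ ξ, expand χ ξ τ] at hj1
    have e1 : β ξ ⁅τ, χ⁆ = - β ⁅τ, χ⁆ ξ := hβanti _ _
    have e2 : τ (β χ ξ) = - τ (β ξ χ) := by rw [hβanti χ ξ, map_neg]
    have e3 : β τ ⁅χ, ξ⁆ = β ⁅ξ, χ⁆ τ := by
      rw [show ⁅χ, ξ⁆ = -⁅ξ, χ⁆ from (lie_skew χ ξ).symm, hβanti, hβneg1, neg_neg]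
    have e4 : β χ ⁅ξ, τ⁆ = - β ⁅ξ, τ⁆ χ := hβanti _ _
    rw [e1, e2, e3, e4] at hj1
    linear_combination hj1
  refine ⟨β, ⟨⟨hβadd1, hβadd2, hβsmul1, hβsmul2, hβalt⟩, hclosed, hbr⟩, ?_⟩
  intro β' ⟨_, _, hbr'⟩
  funext ξ τ
  have h1 := hbr' 0 0 ξ τ
  have h2 := hbr 0 0 ξ τ
  rw [h2] at h1
  have := congrArg Prod.fst h1
  unfold brkt at this
  simpa using this.symm
end

section
/- Let A be a commutative ℂ-algebra and β, γ closed 2-forms on T_A = Der_ℂ(A). There exists an A-module map f : A ⊕ T_A → A ⊕ T_A with f ∘ ι = ι and σ ∘ f = σ that is a Lie algebra isomorphism from (A ⊕ T_A, [·,·]_β) to (A ⊕ T_A, [·,·]_γ) if and only if there exists a 1-form α with dα = β − γ. In other words, the isomorphism classes of split Picard–Lie A-algebroids are in bijection with closed 2-forms modulo differentials of 1-forms. -/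
/-- the split Picard–Lie algebroids `T_A(β)` and `T_A(γ)` are isomorphic
(via an `A`-module map commuting with `ι` and `σ`) iff `β − γ = dα` for some 1-form `α`. -/
theorem stmt5 {A : Type*} [CommRing A] [Algebra ℂ A]
    (β γ : Derivation ℂ A A → Derivation ℂ A A → A)
    (hβ : IsTwoForm β) (hβc : IsClosed2 β) (hγ : IsTwoForm γ) (hγc : IsClosed2 γ) :
    (∃ f : (A × Derivation ℂ A A) →ₗ[A] (A × Derivation ℂ A A),
        (∀ a : A, f (a, 0) = (a, 0)) ∧ (∀ x, (f x).2 = x.2) ∧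
        Function.Bijective f ∧
        (∀ x y, f (brkt β x y) = brkt γ (f x) (f y)))
      ↔ ∃ α : Derivation ℂ A A →ₗ[A] A,
          ∀ ξ τ : Derivation ℂ A A,
            ξ (α τ) - τ (α ξ) - α ⁅ξ, τ⁆ = β ξ τ - γ ξ τ := by
  have pext : ∀ {x y : A × Derivation ℂ A A}, x.1 = y.1 → x.2 = y.2 → x = y := by
    intro x y h1 h2; exact Prod.ext_iff.mpr ⟨h1, h2⟩
  constructor
  · rintro ⟨f, hι, hσ, -, hbr⟩
    refine ⟨{ toFun := fun ξ => (f (0, ξ)).1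
              map_add' := fun ξ τ => by
                show (f (0, ξ + τ)).1 = (f (0, ξ)).1 + (f (0, τ)).1
                have h : ((0 : A), ξ + τ) = ((0 : A), ξ) + ((0 : A), τ) := by
                  simp [Prod.ext_iff]
                rw [h, map_add]; rfl
              map_smul' := fun b ξ => by
                show (f (0, b • ξ)).1 = b • (f (0, ξ)).1
                have h : ((0 : A), b • ξ) = b • ((0 : A), ξ) := by
                  simp [Prod.ext_iff]
                rw [h, map_smul]; rfl }, ?_⟩
    intro ξ τ
    have key := hbr (0, ξ) (0, τ)
    have e1 : brkt β ((0 : A), ξ) ((0 : A), τ) = (β ξ τ, 0) + ((0 : A), ⁅ξ, τ⁆) := by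
      simp [brkt, Prod.ext_iff]
    have hfx : f ((0 : A), ξ) = ((f ((0 : A), ξ)).1, ξ) := pext rfl (hσ _)
    have hfy : f ((0 : A), τ) = ((f ((0 : A), τ)).1, τ) := pext rfl (hσ _)
    rw [e1, map_add, hι, hfx, hfy] at key
    have key1 := congrArg Prod.fst key
    simp only [brkt, Prod.fst_add] at key1
    simp only [LinearMap.coe_mk, AddHom.coe_mk]
    linear_combination -key1
  · rintro ⟨α, hα⟩
    refine ⟨{ toFun := fun x => (x.1 + α x.2, x.2)
              map_add' := fun x y => by
                simp [Prod.ext_iff]; ring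
              map_smul' := fun b x => by
                simp [Prod.ext_iff, smul_eq_mul]; ring }, ?_, ?_, ?_, ?_⟩
    · intro a; simp
    · intro x; rfl
    · constructor
      · intro x y h
        simp only [LinearMap.coe_mk, AddHom.coe_mk] at h
        rw [Prod.mk.injEq] at h
        obtain ⟨h1, h2⟩ := h
        rw [h2] at h1
        have : x.1 = y.1 := by linear_combination h1
        exact pext this h2
      · intro y
        refine ⟨(y.1 - α y.2, y.2), ?_⟩
        simp [Prod.ext_iff]
    · intro x y
      have h := hα x.2 y.2
      refine pext ?_ rfl
      simp only [LinearMap.coe_mk, AddHom.coe_mk, brkt, map_add]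
      linear_combination -h
end

section
/- Let (L, ∂, {μ_n}) be a Lie* algebra. On the quotient ℂ-vector space Lie(L) := (L ⊗ ℂ[t,t⁻¹]) / Im(∂ ⊗ 1 + 1 ⊗ d/dt), the Borcherds bracket [a_[n], b_[m]] := Σ_{j≥0} C(n,j)·(μ_j(a,b))_[n+m−j] (a finite sum) is well-defined — i.e. independent of representatives — and makes Lie(L) a Lie algebra over ℂ (the bracket is alternating and satisfies the Jacobi identity). -/
/-- A Lie* algebra (translation-invariant form; equivalently a Lie conformal
algebra over ℂ). -/
structure LieStar (L : Type*) [AddCommGroup L] [Module ℂ L] where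
  D : L →ₗ[ℂ] L
  mu : ℕ → L →ₗ[ℂ] L →ₗ[ℂ] L
  finiteness : ∀ a b : L, ∃ N : ℕ, ∀ n ≥ N, mu n a b = 0
  sesq_left : ∀ (n : ℕ) (a b : L), mu n (D a) b = (-(n : ℂ)) • mu (n - 1) a b
  sesq_right : ∀ (n : ℕ) (a b : L),
      mu n a (D b) = D (mu n a b) + (n : ℂ) • mu (n - 1) a b
  antisym : ∀ (n : ℕ) (a b : L),
      mu n a b = ∑ᶠ j : ℕ,
        ((-1 : ℂ) ^ (n + j + 1) * ((j.factorial : ℂ))⁻¹) • ((D ^ j) (mu (n + j) b a))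
  jacobi : ∀ (n m : ℕ) (a b c : L),
      mu n a (mu m b c) - mu m b (mu n a c)
        = ∑ᶠ j : ℕ, ((n.choose j : ℂ)) • mu (n + m - j) (mu j a b) c

/-- The operator `∂ ⊗ 1 + 1 ⊗ d/dt` on `L ⊗ ℂ[t,t⁻¹]`, realized on the model
`ℤ →₀ L` in which `a ⊗ tⁿ` is `Finsupp.single n a` (so `a ⊗ tⁿ ↦ ∂a ⊗ tⁿ + n·a ⊗ tⁿ⁻¹`). -/
noncomputable def lieTop {L : Type*} [AddCommGroup L] [Module ℂ L] (D : L →ₗ[ℂ] L) :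
    (ℤ →₀ L) →ₗ[ℂ] (ℤ →₀ L) :=
  Finsupp.lsum ℂ fun n : ℤ => (Finsupp.lsingle n).comp D + (n : ℂ) • Finsupp.lsingle (n - 1)

/-- The class `a_[n]` of `a ⊗ tⁿ` in `Lie(L) = (L ⊗ ℂ[t,t⁻¹]) / Im(∂⊗1 + 1⊗d/dt)`. -/
noncomputable def lieEl {L : Type*} [AddCommGroup L] [Module ℂ L] (D : L →ₗ[ℂ] L)
    (n : ℤ) (a : L) : (ℤ →₀ L) ⧸ LinearMap.range (lieTop D) :=
  (LinearMap.range (lieTop D)).mkQ (Finsupp.single n a)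

/-- The generalized binomial coefficient `C(n,j) = n(n−1)⋯(n−j+1)/j!` for `n : ℤ`. -/
noncomputable def genChoose (n : ℤ) (j : ℕ) : ℂ :=
  ((Finset.range j).prod fun i => (n : ℂ) - (i : ℂ)) / (j.factorial : ℂ)


namespace StmtAux
open Finset

lemma factC (j : ℕ) : (j.factorial : ℂ) ≠ 0 := by
  exact_mod_cast j.factorial_ne_zero

lemma succC (j : ℕ) : ((j : ℂ) + 1) ≠ 0 := Nat.cast_add_one_ne_zero j

lemma gc_zero (n : ℤ) : genChoose n 0 = 1 := by simp [genChoose]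

lemma prod_shift (n : ℤ) (j : ℕ) :
    (n : ℂ) * ∏ i ∈ range j, ((n : ℂ) - (i + 1))
      = ((n : ℂ) - j) * ∏ i ∈ range j, ((n : ℂ) - i) := by
  have h1 := prod_range_succ' (fun i : ℕ => (n : ℂ) - i) j
  have h2 := prod_range_succ (fun i : ℕ => (n : ℂ) - i) j
  push_cast at h1 h2
  simp only [sub_zero] at h1
  have e : ∀ i ∈ range j, (n : ℂ) - ((i : ℂ) + 1) = (n : ℂ) - (((i : ℕ) : ℂ) + 1) := by
    intro i _; norm_num
  rw [mul_comm]
  calc (∏ i ∈ range j, ((n : ℂ) - ((i : ℂ) + 1))) * (n : ℂ)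
      = ∏ x ∈ range (j+1), ((n:ℂ) - x) := by rw [h1]
    _ = ((n : ℂ) - j) * ∏ i ∈ range j, ((n : ℂ) - i) := by rw [h2]; ring

lemma gc_succ (n : ℤ) (j : ℕ) :
    ((j : ℂ) + 1) * genChoose n (j + 1) = ((n : ℂ) - j) * genChoose n j := by
  unfold genChoose
  rw [prod_range_succ, Nat.factorial_succ]
  push_cast
  have h1 : (j.factorial : ℂ) ≠ 0 := factC j
  have h2 := succC j
  field_simp

lemma gc_pred (n : ℤ) (j : ℕ) :
    (n : ℂ) * genChoose (n - 1) j = ((n : ℂ) - j) * genChoose n j := by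
  unfold genChoose
  have e : ∀ i ∈ range j, ((n - 1 : ℤ) : ℂ) - (i:ℂ) = (n : ℂ) - ((i:ℂ) + 1) := by
    intro i _; push_cast; ring
  rw [prod_congr rfl e]
  rw [← mul_div_assoc, ← mul_div_assoc, div_eq_div_iff (factC j) (factC j)]
  linear_combination (j.factorial : ℂ) * prod_shift n j

lemma gc_pascal (n : ℤ) (j : ℕ) :
    genChoose n (j + 1) = genChoose (n - 1) (j + 1) + genChoose (n - 1) j := by
  have e1 := gc_succ n j
  have e2 := gc_succ (n - 1) j
  have e3 := gc_pred n j
  have e4 : ((j:ℂ)+1) * genChoose (n-1) (j+1)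
      = ((n:ℂ) - 1) * genChoose (n-1) j - (j:ℂ) * genChoose (n-1) j := by
    push_cast at e2; linear_combination e2
  apply mul_left_cancel₀ (succC j)
  rw [mul_add]
  linear_combination e1 - e4 - e3


lemma gc_neg (t : ℤ) (k : ℕ) :
    genChoose t k = (-1 : ℂ) ^ k * genChoose ((k : ℤ) - t - 1) k := by
  unfold genChoose
  have key : (∏ i ∈ range k, ((((k : ℤ) - t - 1 : ℤ) : ℂ) - (i : ℂ)))
      = (-1 : ℂ) ^ k * ∏ i ∈ range k, ((t : ℂ) - (i : ℂ)) := by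
    have refl := prod_range_reflect (fun i : ℕ => (i : ℂ) - (t : ℂ)) k
    have e : ∀ i ∈ range k, (((k : ℤ) - t - 1 : ℤ) : ℂ) - (i : ℂ)
        = ((k - 1 - i : ℕ) : ℂ) - (t : ℂ) := by
      intro i hi
      rw [mem_range] at hi
      have h1 : (k - 1 - i : ℕ) = k - (i + 1) := by omega
      rw [h1, Nat.cast_sub (by omega)]
      push_cast
      ring
    rw [prod_congr rfl e, refl]
    have e2 : ∀ i ∈ range k, (i : ℂ) - (t : ℂ) = (-1) * ((t : ℂ) - i) := by
      intro i _; ring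
    rw [prod_congr rfl e2, prod_mul_distrib, prod_const, card_range]
  rw [key]
  have hk : ((-1:ℂ))^k * ((-1:ℂ))^k = 1 := by
    rw [← mul_pow]; norm_num
  have e3 : ((-1:ℂ))^k * (((-1:ℂ)^k * ∏ i ∈ range k, ((t:ℂ)-(i:ℂ))) / (k.factorial:ℂ))
      = (((-1:ℂ))^k * ((-1:ℂ))^k) * ((∏ i ∈ range k, ((t:ℂ)-(i:ℂ))) / (k.factorial:ℂ)) := by
    ring
  rw [e3, hk, one_mul]

lemma gc_zero_left (j : ℕ) (hj : 1 ≤ j) : genChoose 0 j = 0 := by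
  unfold genChoose
  rw [prod_eq_zero (mem_range.2 (by omega : (0:ℕ) < j))]
  · simp
  · simp

/-- Vandermonde's identity for generalized binomial coefficients. -/
lemma gc_vandermonde_aux (y : ℤ) : ∀ x : ℤ, ∀ s : ℕ,
    ∑ j ∈ range (s + 1), genChoose x j * genChoose y (s - j) = genChoose (x + y) s := by
  have base : ∀ s : ℕ, ∑ j ∈ range (s + 1), genChoose 0 j * genChoose y (s - j)
      = genChoose (0 + y) s := by
    intro s
    rw [Finset.sum_eq_single_of_mem 0 (mem_range.2 (by omega))]
    · simp [gc_zero, zero_add]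
    · intro j _ hj
      rw [gc_zero_left j (by omega), zero_mul]
  have step_up : ∀ x : ℤ, (∀ s : ℕ, ∑ j ∈ range (s + 1), genChoose x j * genChoose y (s - j)
        = genChoose (x + y) s) →
      ∀ s : ℕ, ∑ j ∈ range (s + 1), genChoose (x + 1) j * genChoose y (s - j)
        = genChoose (x + 1 + y) s := by
    intro x ih s
    cases s with
    | zero => simp [gc_zero]
    | succ s =>
      rw [Finset.sum_range_succ']
      have pas : ∀ j : ℕ, genChoose (x + 1) (j + 1) = genChoose x (j + 1) + genChoose x j := by
        intro j
        have h := gc_pascal (x + 1) j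
        have hx : x + 1 - 1 = x := by ring
        rw [hx] at h
        exact h
      have e1 : ∀ j ∈ range (s + 1), genChoose (x+1) (j+1) * genChoose y (s + 1 - (j+1))
          = genChoose x (j+1) * genChoose y (s - j) + genChoose x j * genChoose y (s - j) := by
        intro j _
        rw [pas, Nat.succ_sub_succ, add_mul]
      rw [Finset.sum_congr rfl e1, Finset.sum_add_distrib]
      have e2 : ∑ j ∈ range (s + 1), genChoose x (j+1) * genChoose y (s - j)
          = (∑ j ∈ range (s + 2), genChoose x j * genChoose y (s + 1 - j))
            - genChoose y (s + 1) := by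
        rw [Finset.sum_range_succ' (fun j => genChoose x j * genChoose y (s + 1 - j)) (s+1)]
        simp [gc_zero]
      have e3 := ih (s + 1)
      have e4 := ih s
      have pas2 : genChoose (x + 1 + y) (s + 1)
          = genChoose (x + y) (s+1) + genChoose (x + y) s := by
        have h := gc_pascal (x + 1 + y) s
        have hx : x + 1 + y - 1 = x + y := by ring
        rw [hx] at h
        exact h
      simp only [gc_zero, one_mul, Nat.sub_zero]
      rw [e2, e3, e4, pas2]
      ring
  have step_down : ∀ x : ℤ, (∀ s : ℕ, ∑ j ∈ range (s + 1), genChoose x j * genChoose y (s - j)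
        = genChoose (x + y) s) →
      ∀ s : ℕ, ∑ j ∈ range (s + 1), genChoose (x - 1) j * genChoose y (s - j)
        = genChoose (x - 1 + y) s := by
    intro x ih s
    induction s with
    | zero => simp [gc_zero]
    | succ s ihs =>
      rw [Finset.sum_range_succ']
      have pas : ∀ j : ℕ, genChoose (x - 1) (j + 1)
          = genChoose x (j + 1) - genChoose (x - 1) j := by
        intro j; linear_combination -gc_pascal x j
      have e1 : ∀ j ∈ range (s + 1), genChoose (x-1) (j+1) * genChoose y (s + 1 - (j+1))
          = genChoose x (j+1) * genChoose y (s - j) - genChoose (x-1) j * genChoose y (s - j) := by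
        intro j _
        rw [pas, Nat.succ_sub_succ, sub_mul]
      rw [Finset.sum_congr rfl e1, Finset.sum_sub_distrib]
      have e2 : ∑ j ∈ range (s + 1), genChoose x (j+1) * genChoose y (s - j)
          = (∑ j ∈ range (s + 2), genChoose x j * genChoose y (s + 1 - j))
            - genChoose y (s + 1) := by
        rw [Finset.sum_range_succ' (fun j => genChoose x j * genChoose y (s + 1 - j)) (s+1)]
        simp [gc_zero]
      have e3 := ih (s + 1)
      have pas2 : genChoose (x + y) (s + 1)
          = genChoose (x - 1 + y) (s+1) + genChoose (x - 1 + y) s := by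
        have h := gc_pascal (x + y) s
        have hx : x + y - 1 = x - 1 + y := by ring
        rw [hx] at h
        exact h
      simp only [gc_zero, one_mul, Nat.sub_zero]
      rw [e2, e3, ihs]
      linear_combination pas2
  intro x
  induction x using Int.induction_on with
  | zero => exact base
  | succ n ih => exact step_up n ih
  | pred n ih => exact step_down (-n) ih

lemma gc_vandermonde (x y : ℤ) (s : ℕ) :
    ∑ j ∈ range (s + 1), genChoose x j * genChoose y (s - j) = genChoose (x + y) s :=
  gc_vandermonde_aux y x s


/-- Trinomial revision. -/
lemma gc_trinomial (n : ℤ) {j s : ℕ} (h : j ≤ s) :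
    genChoose n s * (s.choose j : ℂ) = genChoose n j * genChoose (n - j) (s - j) := by
  obtain ⟨d, rfl⟩ : ∃ d, s = j + d := ⟨s - j, by omega⟩
  have hd : j + d - j = d := by omega
  rw [hd]
  have hsplit : (∏ i ∈ range (j + d), ((n : ℂ) - i))
      = (∏ i ∈ range j, ((n : ℂ) - i)) * ∏ i ∈ range d, (((n - j : ℤ) : ℂ) - i) := by
    rw [prod_range_add]
    congr 1
    apply prod_congr rfl
    intro i _
    push_cast
    ring
  have hfact : ((j + d).choose j : ℂ) * (j.factorial : ℂ) * (d.factorial : ℂ)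
      = ((j + d).factorial : ℂ) := by
    have h0 := Nat.choose_mul_factorial_mul_factorial (Nat.le_add_right j d)
    rw [hd] at h0
    exact_mod_cast congrArg (Nat.cast (R := ℂ)) h0
  unfold genChoose
  rw [hsplit]
  have h1 := factC j
  have h2 := factC d
  have h3 := factC (j + d)
  push_cast
  field_simp
  linear_combination (∏ i ∈ range j, ((n:ℂ) - i)) * (∏ i ∈ range d, ((n:ℂ) - (j:ℂ) - (i:ℂ))) * hfact

/-- The coefficient identity for antisymmetry of the Borcherds bracket. -/
lemma gc_antisym_coeff (n m : ℤ) (s : ℕ) :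
    ∑ j ∈ range (s + 1), genChoose n j * (-1 : ℂ) ^ (j + 1) * genChoose (n + m - j) (s - j)
      = -genChoose m s := by
  have e1 : ∀ j ∈ range (s + 1),
      genChoose n j * (-1 : ℂ) ^ (j + 1) * genChoose (n + m - j) (s - j)
        = (-1 : ℂ) ^ (s + 1) * (genChoose n j * genChoose ((s : ℤ) - n - m - 1) (s - j)) := by
    intro j hj
    rw [mem_range] at hj
    have hneg := gc_neg (n + m - j) (s - j)
    have harg : ((s - j : ℕ) : ℤ) - (n + m - j) - 1 = (s : ℤ) - n - m - 1 := by
      rw [Nat.cast_sub (by omega)]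
      ring
    rw [harg] at hneg
    rw [hneg]
    have hsign : (-1 : ℂ) ^ (j + 1) * (-1 : ℂ) ^ (s - j) = (-1 : ℂ) ^ (s + 1) := by
      rw [← pow_add]
      congr 1
      omega
    linear_combination (genChoose n j * genChoose ((s:ℤ) - n - m - 1) (s - j)) * hsign
  rw [Finset.sum_congr rfl e1, ← Finset.mul_sum, gc_vandermonde n ((s:ℤ) - n - m - 1) s]
  have harg2 : n + ((s : ℤ) - n - m - 1) = (s : ℤ) - m - 1 := by ring
  rw [harg2]
  have hneg2 := gc_neg m s
  rw [hneg2]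
  ring

end StmtAux


namespace StmtAux
open Finset

lemma finsum_range {M' : Type*} [AddCommMonoid M'] {f : ℕ → M'} {N : ℕ}
    (h : ∀ n, N ≤ n → f n = 0) : ∑ᶠ n, f n = ∑ n ∈ range N, f n := by
  apply finsum_eq_sum_of_support_subset
  intro n hn
  simp only [Function.mem_support] at hn
  simp only [coe_range, Set.mem_Iio]
  by_contra hc
  exact hn (h n (by omega))

variable {L : Type*} [AddCommGroup L] [Module ℂ L]

/-- One term of the Borcherds bracket on the model `ℤ →₀ L`. -/
noncomputable def bterm (S : LieStar L) (n m : ℤ) (a b : L) (j : ℕ) : ℤ →₀ L :=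
  genChoose n j • Finsupp.single (n + m - j) (S.mu j a b)

lemma bterm_vanish (S : LieStar L) (n m : ℤ) (a b : L) (j : ℕ)
    (h : S.mu j a b = 0) : bterm S n m a b j = 0 := by
  simp [bterm, h]

lemma bterm_support (S : LieStar L) (n m : ℤ) (a b : L) :
    (Function.support (bterm S n m a b)).Finite := by
  obtain ⟨N, hN⟩ := S.finiteness a b
  apply Set.Finite.subset (Set.finite_Iio N)
  intro j hj
  simp only [Function.mem_support] at hj
  simp only [Set.mem_Iio]
  by_contra hc
  exact hj (bterm_vanish S n m a b j (hN j (by omega)))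

/-- The Borcherds bracket of `a ⊗ tⁿ` and `b ⊗ tᵐ` on the model. -/
noncomputable def P (S : LieStar L) (n m : ℤ) (a b : L) : ℤ →₀ L :=
  ∑ᶠ j, bterm S n m a b j

lemma P_eq_sum (S : LieStar L) {a b : L} {N : ℕ} (h : ∀ j, N ≤ j → S.mu j a b = 0)
    (n m : ℤ) : P S n m a b = ∑ j ∈ range N, bterm S n m a b j :=
  finsum_range fun j hj => bterm_vanish S n m a b j (h j hj)

lemma P_add_right (S : LieStar L) (n m : ℤ) (a b b' : L) :
    P S n m a (b + b') = P S n m a b + P S n m a b' := by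
  unfold P
  rw [← finsum_add_distrib (bterm_support S n m a b) (bterm_support S n m a b')]
  apply finsum_congr
  intro j
  simp [bterm, Finsupp.single_add, smul_add]

lemma P_smul_right (S : LieStar L) (n m : ℤ) (a : L) (c : ℂ) (b : L) :
    P S n m a (c • b) = c • P S n m a b := by
  unfold P
  rw [smul_finsum' c (bterm_support S n m a b)]
  apply finsum_congr
  intro j
  simp only [bterm, map_smul, Finsupp.smul_single]
  rw [smul_comm]

lemma P_add_left (S : LieStar L) (n m : ℤ) (a a' b : L) :
    P S n m (a + a') b = P S n m a b + P S n m a' b := by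
  unfold P
  rw [← finsum_add_distrib (bterm_support S n m a b) (bterm_support S n m a' b)]
  apply finsum_congr
  intro j
  simp [bterm, Finsupp.single_add, smul_add]

lemma P_smul_left (S : LieStar L) (n m : ℤ) (c : ℂ) (a b : L) :
    P S n m (c • a) b = c • P S n m a b := by
  unfold P
  rw [smul_finsum' c (bterm_support S n m a b)]
  apply finsum_congr
  intro j
  simp only [bterm, map_smul, LinearMap.smul_apply, Finsupp.smul_single]
  rw [smul_comm]

/-- The bracket as a linear map in `b`. -/
noncomputable def Pb (S : LieStar L) (n m : ℤ) (a : L) : L →ₗ[ℂ] (ℤ →₀ L) where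
  toFun b := P S n m a b
  map_add' b b' := P_add_right S n m a b b'
  map_smul' c b := P_smul_right S n m a c b

/-- The bracket as a linear map in `a`, valued in maps on the model. -/
noncomputable def innerL (S : LieStar L) (n : ℤ) : L →ₗ[ℂ] (ℤ →₀ L) →ₗ[ℂ] (ℤ →₀ L) where
  toFun a := Finsupp.lsum ℂ (fun m => Pb S n m a)
  map_add' a a' := by
    apply Finsupp.lhom_ext
    intro m b
    simp only [Finsupp.lsum_single, LinearMap.add_apply, Pb, LinearMap.coe_mk, AddHom.coe_mk]
    exact P_add_left S n m a a' b
  map_smul' c a := by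
    apply Finsupp.lhom_ext
    intro m b
    simp only [Finsupp.lsum_single, RingHom.id_apply, LinearMap.smul_apply, Pb,
      LinearMap.coe_mk, AddHom.coe_mk]
    exact P_smul_left S n m c a b

/-- The Borcherds bracket as a bilinear map on the model `ℤ →₀ L`. -/
noncomputable def beta (S : LieStar L) : (ℤ →₀ L) →ₗ[ℂ] (ℤ →₀ L) →ₗ[ℂ] (ℤ →₀ L) :=
  Finsupp.lsum ℂ (fun n => innerL S n)

@[simp] lemma beta_single (S : LieStar L) (n m : ℤ) (a b : L) :
    beta S (Finsupp.single n a) (Finsupp.single m b) = P S n m a b := by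
  unfold beta
  rw [Finsupp.lsum_single]
  show (Finsupp.lsum ℂ (fun m => Pb S n m a)) (Finsupp.single m b) = _
  rw [Finsupp.lsum_single]
  rfl

lemma lieTop_single (D : L →ₗ[ℂ] L) (n : ℤ) (a : L) :
    lieTop D (Finsupp.single n a)
      = Finsupp.single n (D a) + (n : ℂ) • Finsupp.single (n - 1) a := by
  unfold lieTop
  rw [Finsupp.lsum_single]
  simp [Finsupp.lsingle]

end StmtAux

namespace StmtAux
open Finset

variable {L : Type*} [AddCommGroup L] [Module ℂ L]

lemma single_term {x y : ℤ} (h : x = y) {c d : ℂ} (hc : c = d) (v : L) :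
    c • Finsupp.single x v = d • Finsupp.single y v := by rw [h, hc]

lemma beta_T_left_single (S : LieStar L) (n m : ℤ) (a b : L) :
    P S n m (S.D a) b + (n : ℂ) • P S (n - 1) m a b = 0 := by
  obtain ⟨N1, h1⟩ := S.finiteness a b
  obtain ⟨N2, h2⟩ := S.finiteness (S.D a) b
  set N := max N1 N2 with hN
  have hab : ∀ j, N ≤ j → S.mu j a b = 0 := fun j hj => h1 j (by omega)
  have hDab : ∀ j, N + 1 ≤ j → S.mu j (S.D a) b = 0 := fun j hj => h2 j (by omega)
  have hab1 : ∀ j, N + 1 ≤ j → S.mu j a b = 0 := fun j hj => hab j (by omega)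
  rw [P_eq_sum S hDab n m, P_eq_sum S hab1 (n-1) m, Finset.smul_sum]
  have e1 : ∀ j ∈ range (N+1), bterm S n m (S.D a) b j
      = (-(j:ℂ) * genChoose n j) • Finsupp.single (n + m - j) (S.mu (j-1) a b) := by
    intro j _
    unfold bterm
    rw [S.sesq_left j a b, ← Finsupp.smul_single, smul_smul, mul_comm]
  rw [Finset.sum_congr rfl e1]
  rw [Finset.sum_range_succ'
    (fun j => (-(j:ℂ) * genChoose n j) • Finsupp.single (n + m - j) (S.mu (j-1) a b)) N]
  have e2 : ∀ j ∈ range N,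
      (-((j+1 : ℕ):ℂ) * genChoose n (j+1)) • Finsupp.single (n + m - ((j+1 : ℕ):ℤ)) (S.mu ((j+1) - 1) a b)
      = (((j:ℂ) - n) * genChoose n j) • Finsupp.single (n - 1 + m - j) (S.mu j a b) := by
    intro j _
    rw [show (j + 1) - 1 = j from rfl]
    apply single_term
    · push_cast; ring
    · have h := gc_succ n j
      push_cast
      linear_combination -h
  rw [Finset.sum_congr rfl e2]
  have e3 : ∀ j ∈ range (N+1), (n:ℂ) • bterm S (n-1) m a b j
      = (((n:ℂ) - j) * genChoose n j) • Finsupp.single (n - 1 + m - j) (S.mu j a b) := by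
    intro j _
    unfold bterm
    rw [smul_smul]
    apply single_term
    · rfl
    · linear_combination gc_pred n j
  rw [Finset.sum_congr rfl e3, Finset.sum_range_succ]
  rw [hab N (le_refl N)]
  simp only [Finsupp.single_zero, smul_zero, add_zero, Nat.cast_zero, neg_zero, zero_mul,
    zero_smul, add_zero]
  rw [← Finset.sum_add_distrib]
  apply Finset.sum_eq_zero
  intro j _
  rw [← add_smul]
  have : ((j:ℂ) - n) * genChoose n j + ((n:ℂ) - j) * genChoose n j = 0 := by ring
  rw [this, zero_smul]

lemma beta_T_right_single (S : LieStar L) (n m : ℤ) (a b : L) :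
    P S n m a (S.D b) + (m : ℂ) • P S n (m - 1) a b
      = lieTop S.D (P S n m a b) := by
  obtain ⟨N1, h1⟩ := S.finiteness a b
  obtain ⟨N2, h2⟩ := S.finiteness a (S.D b)
  set N := max N1 N2 with hN
  have hab : ∀ j, N ≤ j → S.mu j a b = 0 := fun j hj => h1 j (by omega)
  have haDb : ∀ j, N + 1 ≤ j → S.mu j a (S.D b) = 0 := fun j hj => h2 j (by omega)
  have hab1 : ∀ j, N + 1 ≤ j → S.mu j a b = 0 := fun j hj => hab j (by omega)
  rw [P_eq_sum S haDb n m, P_eq_sum S hab1 n (m-1), P_eq_sum S hab1 n m, Finset.smul_sum, map_sum]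
  -- expand the left-most sum using sesq_right
  have e1 : ∀ j ∈ range (N+1), bterm S n m a (S.D b) j
      = genChoose n j • Finsupp.single (n + m - j) (S.D (S.mu j a b))
        + ((j:ℂ) * genChoose n j) • Finsupp.single (n + m - j) (S.mu (j-1) a b) := by
    intro j _
    unfold bterm
    rw [S.sesq_right j a b, Finsupp.single_add, smul_add, ← Finsupp.smul_single, smul_smul,
      mul_comm]
  rw [Finset.sum_congr rfl e1, Finset.sum_add_distrib]
  -- expand the right-hand side using lieTop_single
  have e4 : ∀ j ∈ range (N+1), lieTop S.D (bterm S n m a b j)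
      = genChoose n j • Finsupp.single (n + m - j) (S.D (S.mu j a b))
        + (((n:ℂ) + m - j) * genChoose n j) • Finsupp.single (n - 1 + m - j) (S.mu j a b) := by
    intro j _
    unfold bterm
    rw [map_smul, lieTop_single, smul_add, smul_smul]
    congr 1
    · apply single_term
      · show n + m - (j:ℤ) - 1 = n - 1 + m - j
        ring
      · push_cast; ring
  rw [Finset.sum_congr rfl e4, Finset.sum_add_distrib, add_assoc]
  congr 1
  have e2 : ∀ j ∈ range N,
      (((j+1 : ℕ):ℂ) * genChoose n (j+1)) • Finsupp.single (n + m - ((j+1 : ℕ):ℤ)) (S.mu ((j+1) - 1) a b)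
      = (((n:ℂ) - j) * genChoose n j) • Finsupp.single (n - 1 + m - j) (S.mu j a b) := by
    intro j _
    rw [show (j + 1) - 1 = j from rfl]
    apply single_term
    · push_cast; ring
    · have h := gc_succ n j
      push_cast
      linear_combination h
  rw [Finset.sum_range_succ'
    (fun j => ((j:ℂ) * genChoose n j) • Finsupp.single (n + m - (j:ℤ)) (S.mu (j-1) a b)) N]
  rw [Finset.sum_congr rfl e2]
  simp only [Nat.cast_zero, zero_mul, zero_smul, add_zero]
  have e3 : ∀ j ∈ range (N+1), (m:ℂ) • bterm S n (m-1) a b j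
      = ((m:ℂ) * genChoose n j) • Finsupp.single (n - 1 + m - j) (S.mu j a b) := by
    intro j _
    unfold bterm
    rw [smul_smul]
    apply single_term
    · show n + (m - 1) - (j:ℤ) = n - 1 + m - j
      ring
    · ring
  rw [Finset.sum_congr rfl e3]
  rw [Finset.sum_range_succ (fun j => ((m:ℂ) * genChoose n j) • Finsupp.single (n - 1 + m - (j:ℤ)) (S.mu j a b)) N]
  rw [Finset.sum_range_succ (fun j => (((n:ℂ) + m - j) * genChoose n j) • Finsupp.single (n - 1 + m - (j:ℤ)) (S.mu j a b)) N]
  rw [hab N (le_refl N)]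
  simp only [Finsupp.single_zero, smul_zero, add_zero]
  rw [← Finset.sum_add_distrib]
  apply Finset.sum_congr rfl
  intro j _
  rw [← add_smul]
  apply single_term rfl
  ring

end StmtAux

set_option maxHeartbeats 1000000

namespace StmtAux
open Finset

variable {L : Type*} [AddCommGroup L] [Module ℂ L]

lemma beta_T_left (S : LieStar L) (x y : ℤ →₀ L) : beta S (lieTop S.D x) y = 0 := by
  have h : (beta S).comp (lieTop S.D) = 0 := by
    apply Finsupp.lhom_ext
    intro n a
    apply Finsupp.lhom_ext
    intro m b
    simp only [LinearMap.comp_apply, LinearMap.zero_apply]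
    rw [lieTop_single, map_add, map_smul, LinearMap.add_apply, LinearMap.smul_apply,
      beta_single, beta_single]
    exact beta_T_left_single S n m a b
  calc beta S (lieTop S.D x) y = ((beta S).comp (lieTop S.D)) x y := rfl
    _ = 0 := by rw [h]; rfl

lemma beta_T_right (S : LieStar L) (x y : ℤ →₀ L) :
    beta S x (lieTop S.D y) = lieTop S.D (beta S x y) := by
  have h : (beta S).compl₂ (lieTop S.D) = (beta S).compr₂ (lieTop S.D) := by
    apply Finsupp.lhom_ext
    intro n a
    apply Finsupp.lhom_ext
    intro m b
    rw [LinearMap.compl₂_apply, LinearMap.compr₂_apply, lieTop_single]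
    simp only [map_add, map_smul, LinearMap.add_apply, LinearMap.smul_apply, beta_single]
    exact beta_T_right_single S n m a b
  calc beta S x (lieTop S.D y) = (beta S).compl₂ (lieTop S.D) x y := rfl
    _ = lieTop S.D (beta S x y) := by rw [h]; rfl

/-- Bracket with values in the quotient. -/
noncomputable def bl (S : LieStar L) :
    (ℤ →₀ L) →ₗ[ℂ] (ℤ →₀ L) →ₗ[ℂ] ((ℤ →₀ L) ⧸ LinearMap.range (lieTop S.D)) :=
  (beta S).compr₂ (LinearMap.range (lieTop S.D)).mkQ

lemma bl_apply (S : LieStar L) (x y : ℤ →₀ L) :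
    bl S x y = (LinearMap.range (lieTop S.D)).mkQ (beta S x y) := rfl

lemma mkQ_range_zero (S : LieStar L) (y : ℤ →₀ L) :
    (LinearMap.range (lieTop S.D)).mkQ (lieTop S.D y) = 0 := by
  rw [Submodule.mkQ_apply, Submodule.Quotient.mk_eq_zero]
  exact ⟨y, rfl⟩

lemma bl_right_T (S : LieStar L) (x y : ℤ →₀ L) : bl S x (lieTop S.D y) = 0 := by
  rw [bl_apply, beta_T_right]
  exact mkQ_range_zero S _

lemma bl_left_T (S : LieStar L) (x y : ℤ →₀ L) : bl S (lieTop S.D x) y = 0 := by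
  rw [bl_apply, beta_T_left, map_zero]

/-- Partial descent of the bracket to the quotient (second variable). -/
noncomputable def B2 (S : LieStar L) (x : ℤ →₀ L) :
    ((ℤ →₀ L) ⧸ LinearMap.range (lieTop S.D)) →ₗ[ℂ]
      ((ℤ →₀ L) ⧸ LinearMap.range (lieTop S.D)) :=
  (LinearMap.range (lieTop S.D)).liftQ (bl S x) (by
    rintro _ ⟨u, rfl⟩
    rw [LinearMap.mem_ker]
    exact bl_right_T S x u)

lemma B2_mk (S : LieStar L) (x y : ℤ →₀ L) :
    B2 S x ((LinearMap.range (lieTop S.D)).mkQ y) = bl S x y := by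
  unfold B2
  rw [Submodule.mkQ_apply, Submodule.liftQ_apply]

/-- The Borcherds bracket on the quotient. -/
noncomputable def Bmap (S : LieStar L) :
    ((ℤ →₀ L) ⧸ LinearMap.range (lieTop S.D)) →ₗ[ℂ]
      ((ℤ →₀ L) ⧸ LinearMap.range (lieTop S.D)) →ₗ[ℂ]
        ((ℤ →₀ L) ⧸ LinearMap.range (lieTop S.D)) :=
  (LinearMap.range (lieTop S.D)).liftQ
    { toFun := fun x => B2 S x
      map_add' := by
        intro x x'
        apply LinearMap.ext
        intro q
        obtain ⟨y, rfl⟩ := Submodule.mkQ_surjective _ q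
        rw [LinearMap.add_apply, B2_mk, B2_mk, B2_mk, bl_apply, bl_apply, bl_apply,
          map_add, LinearMap.add_apply, map_add]
      map_smul' := by
        intro c x
        apply LinearMap.ext
        intro q
        obtain ⟨y, rfl⟩ := Submodule.mkQ_surjective _ q
        rw [RingHom.id_apply, LinearMap.smul_apply, B2_mk, B2_mk, bl_apply, bl_apply,
          map_smul, LinearMap.smul_apply, map_smul] }
    (by
      rintro _ ⟨u, rfl⟩
      rw [LinearMap.mem_ker]
      apply LinearMap.ext
      intro q
      obtain ⟨y, rfl⟩ := Submodule.mkQ_surjective _ q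
      show B2 S (lieTop S.D u) _ = _
      rw [B2_mk, bl_left_T]
      rfl)

lemma Bmap_mk (S : LieStar L) (x y : ℤ →₀ L) :
    Bmap S ((LinearMap.range (lieTop S.D)).mkQ x) ((LinearMap.range (lieTop S.D)).mkQ y)
      = (LinearMap.range (lieTop S.D)).mkQ (beta S x y) := by
  unfold Bmap
  rw [Submodule.mkQ_apply, Submodule.liftQ_apply]
  show B2 S x _ = _
  rw [B2_mk, bl_apply]

end StmtAux

namespace StmtAux
open Finset

variable {L : Type*} [AddCommGroup L] [Module ℂ L]

/-- `a ↦ class of a ⊗ tᵗ` as a linear map into the quotient. -/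
noncomputable def elL (S : LieStar L) (t : ℤ) :
    L →ₗ[ℂ] ((ℤ →₀ L) ⧸ LinearMap.range (lieTop S.D)) :=
  (LinearMap.range (lieTop S.D)).mkQ ∘ₗ Finsupp.lsingle t

lemma elL_apply (S : LieStar L) (t : ℤ) (v : L) :
    elL S t v = (LinearMap.range (lieTop S.D)).mkQ (Finsupp.single t v) := rfl

lemma mk_term (S : LieStar L) {x y : ℤ} (h : x = y) {c d : ℂ} (hc : c = d) (v : L) :
    c • elL S x v = d • elL S y v := by rw [h, hc]

lemma elL_D (S : LieStar L) (t : ℤ) (c : L) :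
    elL S t (S.D c) = (-(t : ℂ)) • elL S (t - 1) c := by
  have h : (LinearMap.range (lieTop S.D)).mkQ (lieTop S.D (Finsupp.single t c)) = 0 :=
    mkQ_range_zero S _
  rw [lieTop_single, map_add, map_smul] at h
  rw [elL_apply, elL_apply]
  have := eq_neg_of_add_eq_zero_left h
  rw [this, neg_smul]

lemma elL_Dpow (S : LieStar L) (k : ℕ) (t : ℤ) (c : L) :
    elL S t ((S.D ^ k) c)
      = (((-1 : ℂ)) ^ k * (k.factorial : ℂ) * genChoose t k) • elL S (t - k) c := by
  induction k generalizing c with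
  | zero => simp [gc_zero]
  | succ k ih =>
    have hpow : (S.D ^ (k+1)) c = (S.D ^ k) (S.D c) := by
      rw [pow_succ, Module.End.mul_apply]
    rw [hpow, ih (S.D c), elL_D, smul_smul]
    apply mk_term
    · push_cast; ring
    · have h := gc_succ t k
      rw [Nat.factorial_succ]
      push_cast
      linear_combination ((-1:ℂ))^k * (k.factorial : ℂ) * h

lemma bl_antisym_single (S : LieStar L) (n m : ℤ) (a b : L) :
    bl S (Finsupp.single n a) (Finsupp.single m b)
      + bl S (Finsupp.single m b) (Finsupp.single n a) = 0 := by
  obtain ⟨N1, h1⟩ := S.finiteness a b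
  obtain ⟨N2, h2⟩ := S.finiteness b a
  set N := max N1 N2 with hNdef
  have hab : ∀ j, N ≤ j → S.mu j a b = 0 := fun j hj => h1 j (by omega)
  have hba : ∀ j, N ≤ j → S.mu j b a = 0 := fun j hj => h2 j (by omega)
  rw [bl_apply, bl_apply, beta_single, beta_single, P_eq_sum S hab n m, P_eq_sum S hba m n,
    map_sum, map_sum]
  -- expand the first sum by the antisymmetry axiom
  have claim1 : ∀ j ∈ range N, (LinearMap.range (lieTop S.D)).mkQ (bterm S n m a b j)
      = ∑ k ∈ range N, (genChoose n j * (-1:ℂ)^(j+1) * genChoose (n + m - j) k) •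
          elL S (n + m - j - k) (S.mu (j + k) b a) := by
    intro j hj
    have hanti : S.mu j a b = ∑ k ∈ range N,
        ((-1:ℂ) ^ (j + k + 1) * ((k.factorial : ℂ))⁻¹) • ((S.D ^ k) (S.mu (j + k) b a)) := by
      rw [S.antisym j a b]
      apply finsum_range
      intro k hk
      rw [hba (j + k) (by omega), map_zero, smul_zero]
    have e0 : (LinearMap.range (lieTop S.D)).mkQ (bterm S n m a b j)
        = genChoose n j • elL S (n + m - j) (S.mu j a b) := by
      rw [bterm, map_smul]; rfl
    rw [e0, hanti, map_sum, Finset.smul_sum]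
    apply Finset.sum_congr rfl
    intro k _
    rw [map_smul, elL_Dpow, smul_smul, smul_smul]
    apply mk_term
    · rfl
    · have hsign : (-1:ℂ)^(j+k+1) * (-1:ℂ)^k = (-1:ℂ)^(j+1) := by
        rw [← pow_add]
        have h2 : j + k + 1 + k = (j + 1) + 2 * k := by omega
        rw [h2, pow_add, pow_mul]
        norm_num
      have hfact : ((k.factorial : ℂ))⁻¹ * (k.factorial : ℂ) = 1 :=
        inv_mul_cancel₀ (factC k)
      calc genChoose n j * ((-1:ℂ)^(j+k+1) * (k.factorial:ℂ)⁻¹)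
            * ((-1:ℂ)^k * (k.factorial:ℂ) * genChoose (n + m - j) k)
          = (genChoose n j * genChoose (n + m - j) k)
            * ((-1:ℂ)^(j+k+1) * (-1:ℂ)^k) * ((k.factorial:ℂ)⁻¹ * (k.factorial:ℂ)) := by ring
        _ = genChoose n j * (-1:ℂ)^(j+1) * genChoose (n + m - j) k := by
            rw [hsign, hfact]; ring
  rw [Finset.sum_congr rfl claim1]
  -- now a triangular reindexing
  have hF0 : ∀ j k, N ≤ j + k →
      (genChoose n j * (-1:ℂ)^(j+1) * genChoose (n + m - j) k) •
        elL S (n + m - j - k) (S.mu (j + k) b a) = 0 := by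
    intro j k hk
    rw [hba (j + k) hk, map_zero, smul_zero]
  have tri : ∑ j ∈ range N, ∑ k ∈ range N,
        (genChoose n j * (-1:ℂ)^(j+1) * genChoose (n + m - j) k) •
          elL S (n + m - j - k) (S.mu (j + k) b a)
      = ∑ s ∈ range N, ∑ j ∈ range (s+1),
        (genChoose n j * (-1:ℂ)^(j+1) * genChoose (n + m - j) (s - j)) •
          elL S (n + m - j - (s - j : ℕ)) (S.mu (j + (s - j)) b a) := by
    rw [Finset.sum_range_diag_flip N (fun j k =>
      (genChoose n j * (-1:ℂ)^(j+1) * genChoose (n + m - j) k) •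
        elL S (n + m - j - k) (S.mu (j + k) b a))]
    apply Finset.sum_congr rfl
    intro j hj
    refine (Finset.sum_subset (Finset.range_subset_range.mpr (Nat.sub_le N j)) ?_).symm
    intro k hk hk2
    simp only [mem_range] at hk hk2
    exact hF0 j k (by omega)
  rw [tri]
  have diag : ∀ s ∈ range N, ∑ j ∈ range (s+1),
        (genChoose n j * (-1:ℂ)^(j+1) * genChoose (n + m - j) (s - j)) •
          elL S (n + m - j - (s - j : ℕ)) (S.mu (j + (s - j)) b a)
      = (-genChoose m s) • elL S (n + m - s) (S.mu s b a) := by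
    intro s hs
    have e1 : ∀ j ∈ range (s+1),
        (genChoose n j * (-1:ℂ)^(j+1) * genChoose (n + m - j) (s - j)) •
          elL S (n + m - j - (s - j : ℕ)) (S.mu (j + (s - j)) b a)
        = (genChoose n j * (-1:ℂ)^(j+1) * genChoose (n + m - j) (s - j)) •
          elL S (n + m - s) (S.mu s b a) := by
      intro j hj
      rw [mem_range] at hj
      have hj' : j ≤ s := by omega
      have hmu : j + (s - j) = s := by omega
      have hpos : n + m - (j:ℤ) - ((s - j : ℕ) : ℤ) = n + m - s := by
        rw [Nat.cast_sub hj']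
        ring
      rw [hmu, hpos]
    rw [Finset.sum_congr rfl e1, ← Finset.sum_smul, gc_antisym_coeff n m s]
  rw [Finset.sum_congr rfl diag]
  -- and the second term
  have e2 : ∀ s ∈ range N, (LinearMap.range (lieTop S.D)).mkQ (bterm S m n b a s)
      = genChoose m s • elL S (n + m - s) (S.mu s b a) := by
    intro s _
    rw [bterm, map_smul]
    apply mk_term S _ rfl
    ring
  rw [Finset.sum_congr rfl e2, ← Finset.sum_add_distrib]
  apply Finset.sum_eq_zero
  intro s _
  rw [← add_smul]
  have : -genChoose m s + genChoose m s = 0 := by ring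
  rw [this, zero_smul]

/-- Antisymmetry of the quotient bracket, in bilinear form. -/
lemma bl_antisym (S : LieStar L) (x y : ℤ →₀ L) : bl S x y + bl S y x = 0 := by
  have h : bl S + (bl S).flip = 0 := by
    apply Finsupp.lhom_ext
    intro n a
    apply Finsupp.lhom_ext
    intro m b
    simp only [LinearMap.add_apply, LinearMap.flip_apply, LinearMap.zero_apply]
    exact bl_antisym_single S n m a b
  have := LinearMap.congr_fun (LinearMap.congr_fun h x) y
  simpa using this

end StmtAux

namespace StmtAux
open Finset

variable {L : Type*} [AddCommGroup L] [Module ℂ L]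

lemma exists_bound (S : LieStar L) (a b c : L) : ∃ N : ℕ,
    (∀ j, N ≤ j → S.mu j a b = 0) ∧ (∀ j, N ≤ j → S.mu j b c = 0) ∧
    (∀ j, N ≤ j → S.mu j a c = 0) ∧
    (∀ t s, N ≤ s → S.mu s a (S.mu t b c) = 0) ∧
    (∀ t s, N ≤ s → S.mu s b (S.mu t a c) = 0) ∧
    (∀ t s, N ≤ s → S.mu s (S.mu t a b) c = 0) := by
  obtain ⟨Nab, hab⟩ := S.finiteness a b
  obtain ⟨Nbc, hbc⟩ := S.finiteness b c
  obtain ⟨Nac, hac⟩ := S.finiteness a c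
  obtain ⟨N0, hN1, hN2, hN3⟩ : ∃ N0, Nab ≤ N0 ∧ Nbc ≤ N0 ∧ Nac ≤ N0 :=
    ⟨Nab + Nbc + Nac, by omega, by omega, by omega⟩
  choose f hf using fun t => S.finiteness a (S.mu t b c)
  choose g hg using fun t => S.finiteness b (S.mu t a c)
  choose p hp using fun t => S.finiteness (S.mu t a b) c
  refine ⟨((range N0).sup f) + ((range N0).sup g) + ((range N0).sup p) + N0,
    ?_, ?_, ?_, ?_, ?_, ?_⟩
  · intro j hj; exact hab j (by omega)
  · intro j hj; exact hbc j (by omega)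
  · intro j hj; exact hac j (by omega)
  · intro t s hs
    by_cases ht : t < N0
    · exact hf t s (by have := Finset.le_sup (f := f) (mem_range.2 ht); omega)
    · rw [hbc t (by omega)]; simp
  · intro t s hs
    by_cases ht : t < N0
    · exact hg t s (by have := Finset.le_sup (f := g) (mem_range.2 ht); omega)
    · rw [hac t (by omega)]; simp
  · intro t s hs
    by_cases ht : t < N0
    · exact hp t s (by have := Finset.le_sup (f := p) (mem_range.2 ht); omega)
    · rw [hab t (by omega)]; simp

/-- Auxiliary triple-indexed term for the Leibniz identity. -/
noncomputable def Gt (S : LieStar L) (n m k : ℤ) (a b c : L) (j i t : ℕ) : ℤ →₀ L :=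
  (genChoose n j * genChoose (n - j) i * genChoose m t) •
    Finsupp.single (n + m + k - j - i - t) (S.mu (i + t) (S.mu j a b) c)

lemma leibniz_single (S : LieStar L) (n m k : ℤ) (a b c : L) :
    beta S (Finsupp.single n a) (beta S (Finsupp.single m b) (Finsupp.single k c))
      = beta S (Finsupp.single m b) (beta S (Finsupp.single n a) (Finsupp.single k c))
        + beta S (beta S (Finsupp.single n a) (Finsupp.single m b)) (Finsupp.single k c) := by
  obtain ⟨N, hab, hbc, hac, hA, hB, hC⟩ := exists_bound S a b c
  set N2 := 2 * N with hN2def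
  have hGzero : ∀ j i t : ℕ, (N ≤ i + t ∨ N ≤ j) → Gt S n m k a b c j i t = 0 := by
    intro j i t h
    rcases h with h | h
    · rw [Gt, hC j (i + t) h, Finsupp.single_zero, smul_zero]
    · rw [Gt, hab j h]; simp
  -- Expansions of the three double brackets
  have A1 : beta S (Finsupp.single n a) (beta S (Finsupp.single m b) (Finsupp.single k c))
      = ∑ s ∈ range N2, ∑ t ∈ range N2,
          (genChoose n s * genChoose m t) •
            Finsupp.single (n + m + k - s - t) (S.mu s a (S.mu t b c)) := by
    rw [beta_single, P_eq_sum S (N := N2) (fun t ht => hbc t (by omega)) m k, map_sum]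
    have e : ∀ t ∈ range N2, beta S (Finsupp.single n a) (bterm S m k b c t)
        = ∑ s ∈ range N2, (genChoose m t * genChoose n s) •
            Finsupp.single (n + m + k - s - t) (S.mu s a (S.mu t b c)) := by
      intro t _
      rw [bterm, map_smul, beta_single, P_eq_sum S (N := N2) (fun s hs => hA t s (by omega)) n (m + k - t),
        Finset.smul_sum]
      apply Finset.sum_congr rfl
      intro s _
      rw [bterm, smul_smul]
      apply single_term
      · push_cast; ring
      · rfl
    rw [Finset.sum_congr rfl e, Finset.sum_comm]
    apply Finset.sum_congr rfl; intro s _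
    apply Finset.sum_congr rfl; intro t _
    apply single_term rfl
    ring
  have A2 : beta S (Finsupp.single m b) (beta S (Finsupp.single n a) (Finsupp.single k c))
      = ∑ s ∈ range N2, ∑ t ∈ range N2,
          (genChoose n s * genChoose m t) •
            Finsupp.single (n + m + k - s - t) (S.mu t b (S.mu s a c)) := by
    rw [beta_single, P_eq_sum S (N := N2) (fun s hs => hac s (by omega)) n k, map_sum]
    have e : ∀ s ∈ range N2, beta S (Finsupp.single m b) (bterm S n k a c s)
        = ∑ t ∈ range N2, (genChoose n s * genChoose m t) •
            Finsupp.single (n + m + k - s - t) (S.mu t b (S.mu s a c)) := by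
      intro s _
      rw [bterm, map_smul, beta_single, P_eq_sum S (N := N2) (fun t ht => hB s t (by omega)) m (n + k - s),
        Finset.smul_sum]
      apply Finset.sum_congr rfl
      intro t _
      rw [bterm, smul_smul]
      apply single_term
      · push_cast; ring
      · ring
    exact Finset.sum_congr rfl e
  have A3 : beta S (beta S (Finsupp.single n a) (Finsupp.single m b)) (Finsupp.single k c)
      = ∑ j ∈ range N2, ∑ u ∈ range N2,
          (genChoose n j * genChoose (n + m - j) u) •
            Finsupp.single (n + m + k - j - u) (S.mu u (S.mu j a b) c) := by
    rw [beta_single, P_eq_sum S (N := N2) (fun j hj => hab j (by omega)) n m, map_sum,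
      LinearMap.sum_apply]
    have e : ∀ j ∈ range N2, beta S (bterm S n m a b j) (Finsupp.single k c)
        = ∑ u ∈ range N2, (genChoose n j * genChoose (n + m - j) u) •
            Finsupp.single (n + m + k - j - u) (S.mu u (S.mu j a b) c) := by
      intro j _
      rw [bterm, map_smul, LinearMap.smul_apply, beta_single,
        P_eq_sum S (N := N2) (fun u hu => hC j u (by omega)) (n + m - j) k, Finset.smul_sum]
      apply Finset.sum_congr rfl
      intro u _
      rw [bterm, smul_smul]
      apply single_term
      · push_cast; ring
      · ring
    exact Finset.sum_congr rfl e
  -- the difference of the first two, via the Jacobi axiom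
  have jac : ∀ s t : ℕ, S.mu s a (S.mu t b c) - S.mu t b (S.mu s a c)
      = ∑ j ∈ range (s + 1), ((s.choose j : ℂ)) • S.mu (s + t - j) (S.mu j a b) c := by
    intro s t
    rw [S.jacobi s t a b c]
    apply finsum_range
    intro j hj
    rw [Nat.choose_eq_zero_of_lt (by omega)]
    simp
  have key : (∑ s ∈ range N2, ∑ t ∈ range N2,
        (genChoose n s * genChoose m t) •
          Finsupp.single (n + m + k - s - t) (S.mu s a (S.mu t b c)))
      - (∑ s ∈ range N2, ∑ t ∈ range N2,
        (genChoose n s * genChoose m t) •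
          Finsupp.single (n + m + k - s - t) (S.mu t b (S.mu s a c)))
      = ∑ s ∈ range N2, ∑ t ∈ range N2, ∑ j ∈ range (s + 1), Gt S n m k a b c j (s - j) t := by
    rw [← Finset.sum_sub_distrib]
    apply Finset.sum_congr rfl
    intro s _
    rw [← Finset.sum_sub_distrib]
    apply Finset.sum_congr rfl
    intro t _
    rw [← smul_sub, ← Finsupp.single_sub, jac s t]
    have hsingle : Finsupp.single (n + m + k - (s:ℤ) - (t:ℤ))
        (∑ j ∈ range (s + 1), ((s.choose j : ℂ)) • S.mu (s + t - j) (S.mu j a b) c)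
        = ∑ j ∈ range (s + 1), Finsupp.single (n + m + k - (s:ℤ) - (t:ℤ))
            (((s.choose j : ℂ)) • S.mu (s + t - j) (S.mu j a b) c) := by
      simpa only [Finsupp.lsingle_apply] using
        map_sum (Finsupp.lsingle (n + m + k - (s:ℤ) - (t:ℤ)) : L →ₗ[ℂ] (ℤ →₀ L))
          (fun j => ((s.choose j : ℂ)) • S.mu (s + t - j) (S.mu j a b) c) (range (s + 1))
    rw [hsingle, Finset.smul_sum]
    apply Finset.sum_congr rfl
    intro j hj
    rw [mem_range] at hj
    have hj' : j ≤ s := by omega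
    rw [← Finsupp.smul_single, smul_smul, Gt]
    have harg : s + t - j = (s - j) + t := by omega
    rw [harg]
    apply single_term
    · have : ((s - j : ℕ) : ℤ) = (s : ℤ) - j := by omega
      rw [this]; ring
    · have h := gc_trinomial n hj'
      linear_combination genChoose m t * h
  -- reindex the triple sum
  have tri1 : (∑ s ∈ range N2, ∑ t ∈ range N2, ∑ j ∈ range (s + 1),
        Gt S n m k a b c j (s - j) t)
      = ∑ t ∈ range N2, ∑ j ∈ range N2, ∑ i ∈ range N2, Gt S n m k a b c j i t := by
    rw [Finset.sum_comm]
    apply Finset.sum_congr rfl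
    intro t _
    rw [Finset.sum_range_diag_flip N2 (fun j i => Gt S n m k a b c j i t)]
    apply Finset.sum_congr rfl
    intro j hj
    rw [mem_range] at hj
    refine Finset.sum_subset (Finset.range_subset_range.mpr (Nat.sub_le N2 j)) ?_
    intro i hi hi2
    simp only [mem_range] at hi hi2
    apply hGzero
    omega
  -- the third sum, via Vandermonde
  have tri2 : (∑ j ∈ range N2, ∑ u ∈ range N2,
        (genChoose n j * genChoose (n + m - j) u) •
          Finsupp.single (n + m + k - j - u) (S.mu u (S.mu j a b) c))
      = ∑ j ∈ range N2, ∑ i ∈ range N2, ∑ t ∈ range N2, Gt S n m k a b c j i t := by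
    apply Finset.sum_congr rfl
    intro j _
    have e : ∀ u ∈ range N2, (genChoose n j * genChoose (n + m - j) u) •
          Finsupp.single (n + m + k - j - u) (S.mu u (S.mu j a b) c)
        = ∑ i ∈ range (u + 1), Gt S n m k a b c j i (u - i) := by
      intro u _
      have hV : genChoose (n + m - j) u
          = ∑ i ∈ range (u + 1), genChoose (n - j) i * genChoose m (u - i) := by
        have h := gc_vandermonde (n - j) m u
        rw [show n - (j:ℤ) + m = n + m - j by ring] at h
        exact h.symm
      rw [hV, Finset.mul_sum, Finset.sum_smul]
      apply Finset.sum_congr rfl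
      intro i hi
      rw [mem_range] at hi
      have hi' : i ≤ u := by omega
      rw [Gt]
      have harg : i + (u - i) = u := by omega
      rw [harg]
      apply single_term
      · have : ((u - i : ℕ) : ℤ) = (u : ℤ) - i := by omega
        rw [this]; ring
      · ring
    rw [Finset.sum_congr rfl e,
      Finset.sum_range_diag_flip N2 (fun i t => Gt S n m k a b c j i t)]
    apply Finset.sum_congr rfl
    intro i hi
    rw [mem_range] at hi
    refine Finset.sum_subset (Finset.range_subset_range.mpr (Nat.sub_le N2 i)) ?_
    intro t ht ht2
    simp only [mem_range] at ht ht2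
    apply hGzero
    left
    omega
  -- put everything together
  have swap : (∑ t ∈ range N2, ∑ j ∈ range N2, ∑ i ∈ range N2, Gt S n m k a b c j i t)
      = ∑ j ∈ range N2, ∑ i ∈ range N2, ∑ t ∈ range N2, Gt S n m k a b c j i t := by
    rw [Finset.sum_comm]
    apply Finset.sum_congr rfl
    intro j _
    rw [Finset.sum_comm]
  rw [A1, A2, A3, tri2, ← swap, ← tri1, ← key]
  abel

end StmtAux

namespace StmtAux
open Finset

variable {L : Type*} [AddCommGroup L] [Module ℂ L]

/-- Trilinear gadget `x ↦ y ↦ z ↦ β x (β y z)`. -/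
noncomputable def E1 (S : LieStar L) :
    (ℤ →₀ L) →ₗ[ℂ] (ℤ →₀ L) →ₗ[ℂ] (ℤ →₀ L) →ₗ[ℂ] (ℤ →₀ L) where
  toFun x := (beta S).compr₂ (beta S x)
  map_add' x x' := by
    apply LinearMap.ext; intro y; apply LinearMap.ext; intro z
    simp only [LinearMap.compr₂_apply, map_add, LinearMap.add_apply]
  map_smul' c x := by
    apply LinearMap.ext; intro y; apply LinearMap.ext; intro z
    simp only [LinearMap.compr₂_apply, map_smul, LinearMap.smul_apply, RingHom.id_apply]

/-- Trilinear gadget `x ↦ y ↦ z ↦ β y (β x z)`. -/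
noncomputable def E2 (S : LieStar L) :
    (ℤ →₀ L) →ₗ[ℂ] (ℤ →₀ L) →ₗ[ℂ] (ℤ →₀ L) →ₗ[ℂ] (ℤ →₀ L) where
  toFun x := (beta S).compl₂ (beta S x)
  map_add' x x' := by
    apply LinearMap.ext; intro y; apply LinearMap.ext; intro z
    simp only [LinearMap.compl₂_apply, map_add, LinearMap.add_apply]
  map_smul' c x := by
    apply LinearMap.ext; intro y; apply LinearMap.ext; intro z
    simp only [LinearMap.compl₂_apply, map_smul, LinearMap.smul_apply, RingHom.id_apply]

/-- Trilinear gadget `x ↦ y ↦ z ↦ β (β x y) z`. -/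
noncomputable def E3 (S : LieStar L) :
    (ℤ →₀ L) →ₗ[ℂ] (ℤ →₀ L) →ₗ[ℂ] (ℤ →₀ L) →ₗ[ℂ] (ℤ →₀ L) where
  toFun x := (beta S).comp (beta S x)
  map_add' x x' := by
    apply LinearMap.ext; intro y; apply LinearMap.ext; intro z
    simp only [LinearMap.comp_apply, map_add, LinearMap.add_apply]
  map_smul' c x := by
    apply LinearMap.ext; intro y; apply LinearMap.ext; intro z
    simp only [LinearMap.comp_apply, map_smul, LinearMap.smul_apply, RingHom.id_apply]

/-- The exact Leibniz identity on the model. -/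
lemma leibniz (S : LieStar L) (x y z : ℤ →₀ L) :
    beta S x (beta S y z) = beta S y (beta S x z) + beta S (beta S x y) z := by
  have h : E1 S = E2 S + E3 S := by
    apply Finsupp.lhom_ext; intro n a
    apply Finsupp.lhom_ext; intro m b
    apply Finsupp.lhom_ext; intro k c
    show (E1 S) (Finsupp.single n a) (Finsupp.single m b) (Finsupp.single k c)
      = ((E2 S + E3 S)) (Finsupp.single n a) (Finsupp.single m b) (Finsupp.single k c)
    simp only [E1, E2, E3, LinearMap.coe_mk, AddHom.coe_mk, LinearMap.add_apply,
      LinearMap.compr₂_apply, LinearMap.compl₂_apply, LinearMap.comp_apply]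
    exact leibniz_single S n m k a b c
  have h2 := LinearMap.congr_fun (LinearMap.congr_fun (LinearMap.congr_fun h x) y) z
  simpa only [E1, E2, E3, LinearMap.coe_mk, AddHom.coe_mk, LinearMap.add_apply,
    LinearMap.compr₂_apply, LinearMap.compl₂_apply, LinearMap.comp_apply] using h2

lemma bl_inner_range (S : LieStar L) (v r : ℤ →₀ L)
    (hr : (LinearMap.range (lieTop S.D)).mkQ r = 0) :
    (LinearMap.range (lieTop S.D)).mkQ (beta S v r) = 0 := by
  rw [Submodule.mkQ_apply, Submodule.Quotient.mk_eq_zero] at hr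
  obtain ⟨p, hp⟩ := hr
  rw [← hp, beta_T_right]
  exact mkQ_range_zero S _

end StmtAux

open StmtAux in
theorem stmt10' {L : Type*} [AddCommGroup L] [Module ℂ L] (S : LieStar L) :
    ∃ B : ((ℤ →₀ L) ⧸ LinearMap.range (lieTop S.D)) →ₗ[ℂ]
        ((ℤ →₀ L) ⧸ LinearMap.range (lieTop S.D)) →ₗ[ℂ]
        ((ℤ →₀ L) ⧸ LinearMap.range (lieTop S.D)),
      (∀ (a b : L) (n m : ℤ),
        B (lieEl S.D n a) (lieEl S.D m b)
          = ∑ᶠ j : ℕ, genChoose n j • lieEl S.D (n + m - (j : ℤ)) (S.mu j a b)) ∧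
      (∀ x, B x x = 0) ∧
      (∀ x y z, B x (B y z) + B y (B z x) + B z (B x y) = 0) := by
  refine ⟨Bmap S, ?_, ?_, ?_⟩
  · intro a b n m
    have h1 : Bmap S (lieEl S.D n a) (lieEl S.D m b)
        = (LinearMap.range (lieTop S.D)).mkQ (beta S (Finsupp.single n a) (Finsupp.single m b)) :=
      Bmap_mk S _ _
    rw [h1, beta_single]
    unfold P
    have hf : (LinearMap.range (lieTop S.D)).mkQ (∑ᶠ j, bterm S n m a b j)
        = ∑ᶠ j, (LinearMap.range (lieTop S.D)).mkQ (bterm S n m a b j) := by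
      exact ((LinearMap.range (lieTop S.D)).mkQ).toAddMonoidHom.map_finsum
        (bterm_support S n m a b)
    rw [hf]
    apply finsum_congr
    intro j
    show (LinearMap.range (lieTop S.D)).mkQ (bterm S n m a b j) = _
    rw [bterm, map_smul]
    rfl
  · intro x
    obtain ⟨u, rfl⟩ := Submodule.mkQ_surjective _ x
    have h := bl_antisym S u u
    have h1 : Bmap S ((LinearMap.range (lieTop S.D)).mkQ u) ((LinearMap.range (lieTop S.D)).mkQ u)
        = bl S u u := Bmap_mk S u u
    rw [h1]
    have h2 : (2 : ℂ) • bl S u u = 0 := by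
      rw [two_smul]; exact h
    calc bl S u u = ((2⁻¹ : ℂ) * 2) • bl S u u := by norm_num
      _ = (2⁻¹ : ℂ) • ((2 : ℂ) • bl S u u) := mul_smul _ _ _
      _ = 0 := by rw [h2, smul_zero]
  · intro x y z
    obtain ⟨u, rfl⟩ := Submodule.mkQ_surjective _ x
    obtain ⟨v, rfl⟩ := Submodule.mkQ_surjective _ y
    obtain ⟨w, rfl⟩ := Submodule.mkQ_surjective _ z
    set R := LinearMap.range (lieTop S.D)
    have e1 : Bmap S (R.mkQ u) (Bmap S (R.mkQ v) (R.mkQ w)) = R.mkQ (beta S u (beta S v w)) := by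
      rw [Bmap_mk, Bmap_mk]
    have e2 : Bmap S (R.mkQ v) (Bmap S (R.mkQ w) (R.mkQ u)) = R.mkQ (beta S v (beta S w u)) := by
      rw [Bmap_mk, Bmap_mk]
    have e3 : Bmap S (R.mkQ w) (Bmap S (R.mkQ u) (R.mkQ v)) = R.mkQ (beta S w (beta S u v)) := by
      rw [Bmap_mk, Bmap_mk]
    rw [e1, e2, e3]
    -- antisymmetry inside the second term
    have hwu : R.mkQ (beta S w u + beta S u w) = 0 := by
      have := bl_antisym S w u
      rw [bl_apply, bl_apply] at this
      rw [map_add]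
      exact this
    have h2 : R.mkQ (beta S v (beta S w u)) = - R.mkQ (beta S v (beta S u w)) := by
      have hz : R.mkQ (beta S v (beta S w u + beta S u w)) = 0 :=
        bl_inner_range S v _ hwu
      rw [map_add (beta S v), map_add] at hz
      exact eq_neg_of_add_eq_zero_left hz
    have h3 : R.mkQ (beta S w (beta S u v)) = - R.mkQ (beta S (beta S u v) w) := by
      have := bl_antisym S w (beta S u v)
      rw [bl_apply, bl_apply] at this
      exact eq_neg_of_add_eq_zero_left this
    have h1 : R.mkQ (beta S u (beta S v w))
        = R.mkQ (beta S v (beta S u w)) + R.mkQ (beta S (beta S u v) w) := by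
      rw [← map_add]
      exact congrArg _ (leibniz S u v w)
    rw [h1, h2, h3]
    abel




/-- for a Lie* algebra `L`, the Borcherds bracket
`[a_[n], b_[m]] = Σ_{j≥0} C(n,j)·(μ_j(a,b))_[n+m−j]` is well defined on
`Lie(L) = (L ⊗ ℂ[t,t⁻¹])/Im(∂⊗1 + 1⊗d/dt)` and makes it a Lie algebra over ℂ. -/
theorem stmt10 {L : Type*} [AddCommGroup L] [Module ℂ L] (S : LieStar L) :
    ∃ B : ((ℤ →₀ L) ⧸ LinearMap.range (lieTop S.D)) →ₗ[ℂ]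
        ((ℤ →₀ L) ⧸ LinearMap.range (lieTop S.D)) →ₗ[ℂ]
        ((ℤ →₀ L) ⧸ LinearMap.range (lieTop S.D)),
      (∀ (a b : L) (n m : ℤ),
        B (lieEl S.D n a) (lieEl S.D m b)
          = ∑ᶠ j : ℕ, genChoose n j • lieEl S.D (n + m - (j : ℤ)) (S.mu j a b)) ∧
      (∀ x, B x x = 0) ∧
      (∀ x y z, B x (B y z) + B y (B z x) + B z (B x y) = 0) := by
  exact stmt10' S
end
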